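/- Let m ≥ 2 and let S be the polynomial ring over ℂ in the variables X_{ij} for 1 ≤ i ≤ j ≤ m. Let X be the symmetric m×m matrix over S with (i,j)-entry X_{min(i,j),max(i,j)}. Then the ideal of S generated by all (m−1)×(m−1) minors of X has height at least 2. -/

import Mathlib

/-- The height of an ideal `I` of a commutative ring: the infimum of the heights (in the
prime spectrum, ordered by inclusion) of the prime ideals containing `I`. -/
noncomputable def idealHeight {R : Type*} [CommRing R] (I : Ideal R) : ℕ∞ :=
  ⨅ (P : PrimeSpectrum R) (_ : I ≤ P.asIdeal), Order.height P

open MvPolynomial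

section Aux

variable {σ : Type*} [DecidableEq σ]

/-- Splitting off one variable of a multivariate polynomial ring. -/
noncomputable def varSplit (v : σ) :
    MvPolynomial σ ℂ ≃ₐ[ℂ] Polynomial (MvPolynomial {u : σ // u ≠ v} ℂ) :=
  (renameEquiv ℂ (Equiv.optionSubtypeNe v).symm).trans (optionEquivLeft ℂ _)

lemma varSplit_X_of_ne {v u : σ} (hu : u ≠ v) :
    varSplit v (X u) = Polynomial.C (X ⟨u, hu⟩) := by
  simp [varSplit, renameEquiv_apply, rename_X, Equiv.optionSubtypeNe_symm_of_ne hu,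
    optionEquivLeft_X_some]

lemma varSplit_rename_val (v : σ) (q : MvPolynomial {u : σ // u ≠ v} ℂ) :
    varSplit v (rename Subtype.val q) = Polynomial.C q := by
  induction q using MvPolynomial.induction_on with
  | C a =>
      simp [varSplit, renameEquiv_apply, rename_C, optionEquivLeft_C]
  | add p q hp hq => simp [map_add, hp, hq]
  | mul_X p i hp =>
      rw [map_mul, map_mul, hp, rename_X, varSplit_X_of_ne i.2, ← Polynomial.C_mul]

lemma mem_supported_iff_exists_C (v : σ) (p : MvPolynomial σ ℂ) :
    p ∈ supported ℂ {u | u ≠ v} ↔ ∃ c, varSplit v p = Polynomial.C c := by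
  constructor
  · intro hp
    have hp' : p ∈ Algebra.adjoin ℂ (MvPolynomial.X '' {u | u ≠ v}) := hp
    induction hp' using Algebra.adjoin_induction with
    | mem x hx =>
        obtain ⟨u, hu, rfl⟩ := hx
        exact ⟨X ⟨u, hu⟩, varSplit_X_of_ne hu⟩
    | algebraMap r =>
        refine ⟨C r, ?_⟩
        rw [MvPolynomial.algebraMap_eq]
        simp [varSplit, renameEquiv_apply, rename_C, optionEquivLeft_C]
    | add x y hx hy hx' hy' =>
        obtain ⟨cx, hcx⟩ := hx' hx
        obtain ⟨cy, hcy⟩ := hy' hy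
        exact ⟨cx + cy, by rw [map_add, hcx, hcy, map_add]⟩
    | mul x y hx hy hx' hy' =>
        obtain ⟨cx, hcx⟩ := hx' hx
        obtain ⟨cy, hcy⟩ := hy' hy
        exact ⟨cx * cy, by rw [map_mul, hcx, hcy, map_mul]⟩
  · rintro ⟨c, hc⟩
    have hpc : p = rename Subtype.val c :=
      (varSplit v).injective (by rw [hc, varSplit_rename_val])
    rw [hpc, mem_supported]
    refine (Finset.coe_subset.mpr (vars_rename _ _)).trans ?_
    intro u hu
    simp only [Finset.coe_image, Set.mem_image] at hu
    obtain ⟨u', _, rfl⟩ := hu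
    exact u'.2

/-- If `f` divides a nonzero polynomial not involving the variable `v`, then `f` does not
involve `v` either. -/
lemma supported_of_mul_supported (v : σ) {f g : MvPolynomial σ ℂ}
    (h0 : f * g ≠ 0) (h : f * g ∈ supported ℂ {u | u ≠ v}) :
    f ∈ supported ℂ {u | u ≠ v} := by
  have hf : f ≠ 0 := fun h' => h0 (by rw [h', zero_mul])
  have hg : g ≠ 0 := fun h' => h0 (by rw [h', mul_zero])
  have hΨf : varSplit v f ≠ 0 := fun h' => hf ((varSplit v).injective (by simp [h']))
  have hΨg : varSplit v g ≠ 0 := fun h' => hg ((varSplit v).injective (by simp [h']))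
  obtain ⟨c, hc⟩ := (mem_supported_iff_exists_C v _).mp h
  have hdeg : (varSplit v f).natDegree + (varSplit v g).natDegree = 0 := by
    rw [← Polynomial.natDegree_mul hΨf hΨg, ← map_mul, hc, Polynomial.natDegree_C]
  have : (varSplit v f).natDegree = 0 := Nat.eq_zero_of_add_eq_zero_right hdeg
  obtain ⟨cf, hcf⟩ := Polynomial.natDegree_eq_zero.mp this
  exact (mem_supported_iff_exists_C v f).mpr ⟨cf, hcf.symm⟩

end Aux

section Minors

/-- The embedding of `Fin (n+1)` into `Fin (n+2)` avoiding `k`. -/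
def embAvoid {n : ℕ} (k : Fin (n + 2)) : Fin (n + 1) ↪ Fin (n + 2) :=
  ⟨k.succAbove, Fin.succAbove_right_injective⟩

/-- The principal minor of the generic symmetric matrix avoiding the index `k`. -/
noncomputable def prMinor {n : ℕ} (k : Fin (n + 2)) :
    MvPolynomial {p : Fin (n + 2) × Fin (n + 2) // p.1 ≤ p.2} ℂ :=
  Matrix.det (fun i j : Fin (n + 2 - 1) =>
    MvPolynomial.X ⟨(min (embAvoid k i) (embAvoid k j), max (embAvoid k i) (embAvoid k j)),
      min_le_max⟩)

lemma prMinor_ne_zero {n : ℕ} (k : Fin (n + 2)) : prMinor k ≠ 0 := by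
  intro hk
  set φ : {p : Fin (n + 2) × Fin (n + 2) // p.1 ≤ p.2} → ℂ :=
    fun u => if u.1.1 = u.1.2 then (1 : ℂ) else 0 with hφ
  have h1 : (MvPolynomial.eval φ) (prMinor k) = 1 := by
    rw [prMinor]
    refine (RingHom.map_det (MvPolynomial.eval φ) _).trans ?_
    have h2 : (MvPolynomial.eval φ).mapMatrix
        (fun i j : Fin (n + 2 - 1) =>
          MvPolynomial.X (R := ℂ)
            ⟨(min (embAvoid k i) (embAvoid k j), max (embAvoid k i) (embAvoid k j)),
              min_le_max⟩) = 1 := by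
      ext i j
      erw [RingHom.mapMatrix_apply, Matrix.map_apply, eval_X]
      by_cases hij : i = j
      · subst hij
        simp [hφ]
      · have hne : embAvoid k i ≠ embAvoid k j := fun h => hij ((embAvoid k).injective h)
        have hmm : min (embAvoid k i) (embAvoid k j) ≠ max (embAvoid k i) (embAvoid k j) :=
          (min_lt_max.mpr hne).ne
        simp only [hφ, hmm, if_false, Matrix.one_apply_ne hij]
    rw [h2, Matrix.det_one]
  rw [hk, map_zero] at h1
  exact zero_ne_one h1

lemma prMinor_mem_supported {n : ℕ} (k : Fin (n + 2)) :
    prMinor k ∈ supported ℂ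
      {u : {p : Fin (n + 2) × Fin (n + 2) // p.1 ≤ p.2} | u.1.1 ≠ k ∧ u.1.2 ≠ k} := by
  rw [prMinor]
  erw [Matrix.det_apply]
  refine Subalgebra.sum_mem _ fun s _ => Subalgebra.zsmul_mem _ ?_ _
  refine Subalgebra.prod_mem _ fun i _ => ?_
  refine (X_mem_supported (R := ℂ)).mpr ?_
  constructor
  · show embAvoid k (s i) ⊓ embAvoid k i ≠ k
    rcases min_choice (embAvoid k (s i)) (embAvoid k i) with h | h <;>
      rw [h] <;> exact Fin.succAbove_ne k _
  · show embAvoid k (s i) ⊔ embAvoid k i ≠ k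
    rcases max_choice (embAvoid k (s i)) (embAvoid k i) with h | h <;>
      rw [h] <;> exact Fin.succAbove_ne k _

end Minors

/-- Let `m ≥ 2` and let `S` be the polynomial ring over `ℂ` in variables `X_{ij}`,
`i ≤ j`. Let `X` be the generic symmetric `m×m` matrix, with `(i,j)`-entry
`X_{min(i,j), max(i,j)}`. Then the ideal generated by all `(m−1)×(m−1)` minors of `X`
has height at least 2. -/
theorem genericSymmetricMatrix_subMinors_height_ge_two (m : ℕ) (hm : 2 ≤ m) :
    2 ≤ idealHeight (Ideal.span
      { d : MvPolynomial {p : Fin m × Fin m // p.1 ≤ p.2} ℂ |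
        ∃ (r c : Fin (m - 1) ↪ Fin m),
          d = Matrix.det (fun i j : Fin (m - 1) =>
            MvPolynomial.X ⟨(min (r i) (c j), max (r i) (c j)), min_le_max⟩) }) := by
  obtain ⟨n, rfl⟩ : ∃ n, m = n + 2 := ⟨m - 2, by omega⟩
  set σn := {p : Fin (n + 2) × Fin (n + 2) // p.1 ≤ p.2} with hσn
  set S := MvPolynomial σn ℂ with hS
  set gens : Set S := { d : S |
        ∃ (r c : Fin (n + 2 - 1) ↪ Fin (n + 2)),
          d = Matrix.det (fun i j : Fin (n + 2 - 1) =>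
            MvPolynomial.X ⟨(min (r i) (c j), max (r i) (c j)), min_le_max⟩) } with hgens
  have hMgen : ∀ k : Fin (n + 2), prMinor k ∈ gens := fun k => ⟨embAvoid k, embAvoid k, rfl⟩
  rw [idealHeight]
  refine le_iInf fun P => le_iInf fun hP => ?_
  haveI hPprime : P.asIdeal.IsPrime := P.2
  have hPne : P.asIdeal ≠ ⊥ := by
    intro h
    have : prMinor (0 : Fin (n + 2)) ∈ P.asIdeal := hP (Ideal.subset_span (hMgen 0))
    rw [h, Ideal.mem_bot] at this
    exact prMinor_ne_zero 0 this
  obtain ⟨f, hfP, hfprime⟩ := hPprime.exists_mem_prime_of_ne_bot hPne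
  have hf0 : f ≠ 0 := hfprime.ne_zero
  have hQprime : (Ideal.span {f}).IsPrime := (Ideal.span_singleton_prime hf0).mpr hfprime
  have hQP : Ideal.span {f} < P.asIdeal := by
    refine lt_of_le_of_ne ((Ideal.span_le).mpr ?_) ?_
    · intro x hx; rw [Set.mem_singleton_iff] at hx; subst hx; exact hfP
    · intro hEq
      have hdvd : ∀ k : Fin (n + 2), f ∣ prMinor k := by
        intro k
        have : prMinor k ∈ Ideal.span {f} := hEq ▸ hP (Ideal.subset_span (hMgen k))
        exact (Ideal.mem_span_singleton).mp this
      have hsup : ∀ v : σn, f ∈ supported ℂ {u | u ≠ v} := by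
        intro v
        obtain ⟨g, hg⟩ := hdvd v.1.1
        refine supported_of_mul_supported v (f := f) (g := g) ?_ ?_
        · rw [← hg]; exact prMinor_ne_zero v.1.1
        · rw [← hg]
          refine supported_mono ?_ (prMinor_mem_supported v.1.1)
          intro u hu hv
          exact hu.1 (by rw [hv])
      have hvars : f ∈ supported ℂ (∅ : Set σn) := by
        rw [mem_supported]
        intro v hv
        have := (mem_supported.mp (hsup v)) hv
        exact absurd rfl this
      rw [supported_empty, Algebra.mem_bot] at hvars
      obtain ⟨c, hc⟩ := hvars
      have hc0 : c ≠ 0 := fun h => hf0 (by rw [← hc, h, map_zero])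
      exact hfprime.not_unit (hc ▸ (isUnit_iff_ne_zero.mpr hc0).map (algebraMap ℂ S))
  let P0 : PrimeSpectrum S := ⟨⊥, Ideal.bot_prime⟩
  let P1 : PrimeSpectrum S := ⟨Ideal.span {f}, hQprime⟩
  have h01 : P0 < P1 := by
    rw [← PrimeSpectrum.asIdeal_lt_asIdeal]
    exact lt_of_le_of_ne bot_le (Ne.symm ((Ideal.span_singleton_eq_bot).not.mpr hf0))
  have h12 : P1 < P := by
    rw [← PrimeSpectrum.asIdeal_lt_asIdeal]
    exact hQP
  let ch : LTSeries (PrimeSpectrum S) :=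
    ((RelSeries.singleton _ P0).snoc P1 (by simpa using h01)).snoc P (by simpa using h12)
  have hlast : ch.last = P := RelSeries.last_snoc _ _ _
  have hlen : ch.length = 2 := rfl
  have := Order.length_le_height_last (p := ch)
  rw [hlast, hlen] at this
  exact_mod_cast this
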